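/- The averaged Borda count never exhibits a Condorcet loser failure: in any election with possibly partial ballots on n candidates, if candidate A loses every pairwise majority comparison (where a ranked candidate is counted as preferred to every unranked candidate, and ballots leaving both candidates unranked are ignored), then A does not have the strictly largest ABC score. -/

import Mathlib

/- A (possibly partial) ballot on `n` candidates is a duplicate-free nonempty list of
the ranked candidates in order of preference (head = first choice).  The averaged
Borda count (ABC) awards points (n, n-1, ..., n-k+1) to the k ranked candidates and
(n-k+1)/2 to each unranked candidate. -/

/-- ABC score of candidate `c` (rational-valued). -/
def abcScore (n : ℕ) (ballots : Multiset (List (Fin n))) (c : Fin n) : ℚ :=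
  (ballots.map (fun l =>
    if c ∈ l then (n : ℚ) - l.idxOf c else ((n : ℚ) - l.length + 1) / 2)).sum

/-- On a ballot `l`, candidate `x` is preferred to `y` if `x` is ranked above `y`,
or `x` is ranked and `y` is unranked. -/
def Prefers {n : ℕ} (l : List (Fin n)) (x y : Fin n) : Prop :=
  (x ∈ l ∧ y ∈ l ∧ l.idxOf x < l.idxOf y) ∨ (x ∈ l ∧ y ∉ l)

instance {n : ℕ} (l : List (Fin n)) (x y : Fin n) : Decidable (Prefers l x y) := by
  unfold Prefers; infer_instance

noncomputable def gpt {n : ℕ} (l : List (Fin n)) (x y : Fin n) : ℚ :=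
  if Prefers l x y then 1 else if x ∉ l ∧ y ∉ l then 1/2 else 0

open Finset in
lemma length_le {n : ℕ} {l : List (Fin n)} (hl : l.Nodup) : l.length ≤ n := by
  classical
  calc l.length = l.toFinset.card := (List.toFinset_card_of_nodup hl).symm
  _ ≤ (Finset.univ : Finset (Fin n)).card := Finset.card_le_univ _
  _ = n := Finset.card_univ.trans (Fintype.card_fin n)

open Finset in
lemma card_notmem {n : ℕ} {l : List (Fin n)} (hl : l.Nodup) :
    (univ.filter (fun y => y ∉ l)).card = n - l.length := by
  classical
  have h1 : (univ.filter (fun y => y ∈ l)) = l.toFinset := by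
    ext y; simp
  have := Finset.card_filter_add_card_filter_not (s := (univ : Finset (Fin n)))
    (p := fun y => y ∈ l)
  rw [h1, List.toFinset_card_of_nodup hl, Finset.card_univ, Fintype.card_fin] at this
  omega

open Finset in
lemma card_below {n : ℕ} {l : List (Fin n)} (hl : l.Nodup) {c : Fin n} (hc : c ∈ l) :
    (univ.filter (fun y => y ∈ l ∧ l.idxOf c < l.idxOf y)).card
      = l.length - l.idxOf c - 1 := by
  classical
  have : (univ.filter (fun y => y ∈ l ∧ l.idxOf c < l.idxOf y)).card
      = (Finset.Ioo (l.idxOf c) l.length).card := by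
    apply Finset.card_nbij (i := fun y => l.idxOf y)
    · intro a ha
      simp only [coe_filter, Set.mem_setOf_eq, mem_filter, coe_univ, Set.mem_univ, mem_univ, true_and] at ha
      simp [Finset.mem_Ioo, ha.2, List.idxOf_lt_length_iff.2 ha.1]
    · intro a ha b hb hab
      simp only [coe_filter, Set.mem_setOf_eq] at ha hb
      exact (List.idxOf_inj ha.2.1).1 hab
    · intro i hi
      simp only [coe_filter, Set.mem_setOf_eq, Finset.coe_Ioo, Set.mem_Ioo] at hi ⊢
      refine ⟨l.get ⟨i, hi.2⟩, ⟨Finset.mem_univ _, l.get_mem _, ?_⟩, ?_⟩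
      · rw [← List.Nodup.idxOf_getElem hl i hi.2] at hi
        simpa using hi.1
      · simp [List.Nodup.idxOf_getElem hl i hi.2]
  rw [this, Nat.card_Ioo]

open Finset in
lemma pointwise {n : ℕ} {l : List (Fin n)} (hl : l.Nodup) (c : Fin n) :
    (if c ∈ l then (n : ℚ) - l.idxOf c else ((n : ℚ) - l.length + 1) / 2)
      = 1 + ∑ y ∈ univ.erase c, gpt l c y := by
  classical
  by_cases hc : c ∈ l
  · rw [if_pos hc]
    have hg : ∀ y ∈ univ.erase c, gpt l c y = if Prefers l c y then 1 else 0 := by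
      intro y _
      unfold gpt
      by_cases h : Prefers l c y
      · simp [h]
      · simp [h, hc]
    rw [Finset.sum_congr rfl hg, ← Finset.sum_filter]
    have hsplit : (univ.erase c).filter (fun y => Prefers l c y)
        = (univ.filter (fun y => y ∈ l ∧ l.idxOf c < l.idxOf y))
          ∪ (univ.filter (fun y => y ∉ l)) := by
      ext y
      simp only [mem_filter, mem_union, mem_erase, mem_univ, true_and, and_true]
      unfold Prefers
      constructor
      · rintro ⟨hy, (⟨_, h1, h2⟩ | ⟨_, h2⟩)⟩
        · exact Or.inl ⟨h1, h2⟩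
        · exact Or.inr h2
      · rintro (⟨h1, h2⟩ | h1)
        · exact ⟨fun h => by subst h; omega, Or.inl ⟨hc, h1, h2⟩⟩
        · exact ⟨fun h => by subst h; exact h1 hc, Or.inr ⟨hc, h1⟩⟩
    have hdisj : Disjoint (univ.filter (fun y => y ∈ l ∧ l.idxOf c < l.idxOf y))
        (univ.filter (fun y => y ∉ l)) := by
      rw [Finset.disjoint_filter]
      intro y _ hy hy2
      exact hy2 hy.1
    rw [hsplit, Finset.sum_union hdisj]
    simp only [Finset.sum_const, nsmul_eq_mul, mul_one]
    rw [card_below hl hc, card_notmem hl]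
    have h1 : l.idxOf c < l.length := List.idxOf_lt_length_iff.2 hc
    have h2 : l.length ≤ n := length_le hl
    have e : ((l.length - List.idxOf c l - 1 : ℕ) : ℚ) = (l.length:ℚ) - l.idxOf c - 1 := by
      have h4 : l.length - l.idxOf c - 1 = l.length - (l.idxOf c + 1) := by omega
      rw [h4, Nat.cast_sub (by omega)]; push_cast; ring
    have e2 : ((n - l.length : ℕ) : ℚ) = (n:ℚ) - l.length := by
      rw [Nat.cast_sub h2]
    rw [e, e2]; ring
  · rw [if_neg hc]
    have hg : ∀ y ∈ univ.erase c, gpt l c y = if y ∉ l then (1:ℚ)/2 else 0 := by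
      intro y _
      unfold gpt
      have : ¬ Prefers l c y := by unfold Prefers; tauto
      by_cases h : y ∈ l <;> simp [this, h, hc]
    rw [Finset.sum_congr rfl hg, ← Finset.sum_filter]
    have : (univ.erase c).filter (fun y => y ∉ l) = (univ.filter (fun y => y ∉ l)).erase c := by
      ext y; simp only [mem_filter, mem_erase, mem_univ, true_and]; tauto
    rw [this]
    simp only [Finset.sum_const, nsmul_eq_mul]
    rw [Finset.card_erase_of_mem (by simp [hc]), card_notmem hl]
    have h2 : l.length ≤ n := length_le hl
    have h3 : l.length < n := by
      rcases Nat.lt_or_ge l.length n with h | h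
      · exact h
      · exfalso
        have : l.toFinset = univ := Finset.eq_univ_of_card _ (by
          rw [List.toFinset_card_of_nodup hl, Fintype.card_fin]; omega)
        exact hc (by rw [← List.mem_toFinset, this]; exact mem_univ c)
    rw [Nat.cast_sub (by omega : 1 ≤ n - l.length), Nat.cast_sub h2]
    ring

lemma msum_fsum {α β : Type*} (s : Multiset α) (t : Finset β) (f : α → β → ℚ) :
    (s.map (fun a => ∑ b ∈ t, f a b)).sum = ∑ b ∈ t, (s.map (fun a => f a b)).sum := by
  induction s using Multiset.induction with
  | empty => simp
  | cons a s ih => simp [ih, Finset.sum_add_distrib]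

lemma ind_sum {α : Type*} (s : Multiset α) (p : α → Prop) [DecidablePred p] :
    (s.map (fun a => if p a then (1:ℚ) else 0)).sum = (s.filter p).card := by
  induction s using Multiset.induction with
  | empty => simp
  | cons a s ih => by_cases h : p a <;> simp [h, ih] <;> push_cast <;> ring

lemma gpt_eq {n : ℕ} (l : List (Fin n)) (x y : Fin n) :
    gpt l x y = (if Prefers l x y then (1:ℚ) else 0)
      + (if x ∉ l ∧ y ∉ l then (1:ℚ)/2 else 0) := by
  unfold gpt
  by_cases h : Prefers l x y
  · have hx : x ∈ l := by rcases h with ⟨hx, _⟩ | ⟨hx, _⟩ <;> exact hx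
    simp [h, hx]
  · by_cases h2 : x ∉ l ∧ y ∉ l <;> simp [h, h2]

lemma gpt_add {n : ℕ} (l : List (Fin n)) {x y : Fin n} (hxy : x ≠ y) :
    gpt l x y + gpt l y x = 1 := by
  unfold gpt
  by_cases hx : x ∈ l <;> by_cases hy : y ∈ l
  · have hne : l.idxOf x ≠ l.idxOf y := fun h => hxy ((List.idxOf_inj hx).1 h)
    rcases Nat.lt_or_ge (l.idxOf x) (l.idxOf y) with h | h
    · have p1 : Prefers l x y := Or.inl ⟨hx, hy, h⟩
      have p2 : ¬ Prefers l y x := by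
        unfold Prefers; push_neg; exact ⟨fun _ _ => by omega, fun _ => hx⟩
      simp [p1, p2, hx]
    · have hlt : l.idxOf y < l.idxOf x := by omega
      have p1 : ¬ Prefers l x y := by
        unfold Prefers; push_neg; exact ⟨fun _ _ => by omega, fun _ => hy⟩
      have p2 : Prefers l y x := Or.inl ⟨hy, hx, hlt⟩
      simp [p1, p2, hy]
  · have p1 : Prefers l x y := Or.inr ⟨hx, hy⟩
    have p2 : ¬ Prefers l y x := by unfold Prefers; push_neg; tauto
    simp [p1, p2, hx]
  · have p1 : ¬ Prefers l x y := by unfold Prefers; push_neg; tauto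
    have p2 : Prefers l y x := Or.inr ⟨hy, hx⟩
    simp [p1, p2, hy]
  · have p1 : ¬ Prefers l x y := by unfold Prefers; push_neg; tauto
    have p2 : ¬ Prefers l y x := by unfold Prefers; push_neg; tauto
    simp [p1, p2, hx, hy]
    norm_num

open Finset in
/-- **ABC never exhibits a Condorcet loser failure**: if `A` loses every pairwise
majority comparison (ballots ranking neither candidate are ignored), then `A` does
not have the strictly largest ABC score. -/
theorem abc_no_condorcet_loser (n : ℕ) (hn : 2 ≤ n)
    (ballots : Multiset (List (Fin n)))
    (hvalid : ∀ l ∈ ballots, l ≠ [] ∧ l.Nodup)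
    (A : Fin n)
    (hCL : ∀ B : Fin n, B ≠ A →
      (ballots.filter (fun l => Prefers l B A)).card >
      (ballots.filter (fun l => Prefers l A B)).card) :
    ¬ (∀ B : Fin n, B ≠ A → abcScore n ballots B < abcScore n ballots A) := by
  classical
  intro hcon
  set m : ℚ := (ballots.card : ℚ) with hm
  set F : Fin n → Fin n → ℚ := fun x y => (ballots.map (fun l => gpt l x y)).sum with hFdef
  -- score decomposition
  have hscore : ∀ c : Fin n, abcScore n ballots c = m + ∑ y ∈ univ.erase c, F c y := by
    intro c
    unfold abcScore
    have : ballots.map (fun l =>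
        if c ∈ l then (n : ℚ) - l.idxOf c else ((n : ℚ) - l.length + 1) / 2)
        = ballots.map (fun l => 1 + ∑ y ∈ univ.erase c, gpt l c y) := by
      apply Multiset.map_congr rfl
      intro l hl
      exact pointwise (hvalid l hl).2 c
    rw [this, Multiset.sum_map_add]
    congr 1
    · simp [hm]
    · rw [msum_fsum]
  -- pairwise sums
  have hFadd : ∀ x y : Fin n, x ≠ y → F x y + F y x = m := by
    intro x y hxy
    rw [hFdef]
    simp only
    rw [← Multiset.sum_map_add]
    have : ballots.map (fun l => gpt l x y + gpt l y x) = ballots.map (fun _ => (1:ℚ)) := by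
      apply Multiset.map_congr rfl
      intro l _
      exact gpt_add l hxy
    rw [this, Multiset.map_const', Multiset.sum_replicate]
    simp [hm]
  -- Condorcet loser gives F A B < F B A
  have hFA : ∀ B : Fin n, B ≠ A → F A B < F B A := by
    intro B hB
    have hsplit : ∀ x y : Fin n, F x y
        = ((ballots.filter (fun l => Prefers l x y)).card : ℚ)
          + (ballots.map (fun l => if x ∉ l ∧ y ∉ l then (1:ℚ)/2 else 0)).sum := by
      intro x y
      rw [hFdef]
      simp only
      have : ballots.map (fun l => gpt l x y)
          = ballots.map (fun l => (if Prefers l x y then (1:ℚ) else 0)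
              + (if x ∉ l ∧ y ∉ l then (1:ℚ)/2 else 0)) := by
        apply Multiset.map_congr rfl
        intro l _
        exact gpt_eq l x y
      rw [this, Multiset.sum_map_add, ind_sum]
    rw [hsplit A B, hsplit B A]
    have htie : (ballots.map (fun l => if A ∉ l ∧ B ∉ l then (1:ℚ)/2 else 0)).sum
        = (ballots.map (fun l => if B ∉ l ∧ A ∉ l then (1:ℚ)/2 else 0)).sum := by
      congr 1
      apply Multiset.map_congr rfl
      intro l _
      simp [and_comm]
    rw [htie]
    have := hCL B hB
    have : ((ballots.filter (fun l => Prefers l A B)).card : ℚ)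
        < ((ballots.filter (fun l => Prefers l B A)).card : ℚ) := by
      exact_mod_cast this
    linarith
  have hFhalf : ∀ B : Fin n, B ≠ A → F A B < m / 2 := by
    intro B hB
    have h1 := hFadd A B (Ne.symm hB)
    have h2 := hFA B hB
    linarith
  -- total sum of scores
  set S : ℚ := ∑ c : Fin n, ∑ y ∈ univ.erase c, F c y with hS
  have hswap : ∑ c : Fin n, ∑ y ∈ univ.erase c, F y c = S := by
    have e1 : ∀ (G : Fin n → Fin n → ℚ), ∑ c : Fin n, ∑ y ∈ univ.erase c, G c y
        = (∑ c : Fin n, ∑ y : Fin n, G c y) - ∑ c : Fin n, G c c := by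
      intro G
      rw [← Finset.sum_sub_distrib]
      apply Finset.sum_congr rfl
      intro c _
      rw [Finset.sum_erase_eq_sub (Finset.mem_univ c)]
    rw [hS, e1, e1]
    congr 1
    exact Finset.sum_comm
  have hcard : ((univ.erase A).card : ℚ) = (n : ℚ) - 1 := by
    rw [Finset.card_erase_of_mem (Finset.mem_univ A), Finset.card_univ, Fintype.card_fin,
      Nat.cast_sub (by omega : 1 ≤ n), Nat.cast_one]
  have h2S : 2 * S = (n : ℚ) * ((n : ℚ) - 1) * m := by
    have hss : S + S = ∑ c : Fin n, ∑ y ∈ univ.erase c, (F c y + F y c) := by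
      simp only [Finset.sum_add_distrib]
      rw [hswap]
    have hinner : ∀ c : Fin n, ∑ y ∈ univ.erase c, (F c y + F y c) = ((n:ℚ) - 1) * m := by
      intro c
      have : ∀ y ∈ univ.erase c, F c y + F y c = m := by
        intro y hy
        exact hFadd c y (Ne.symm (Finset.ne_of_mem_erase hy))
      rw [Finset.sum_congr rfl this, Finset.sum_const, nsmul_eq_mul]
      congr 1
      rw [Finset.card_erase_of_mem (Finset.mem_univ c), Finset.card_univ, Fintype.card_fin,
        Nat.cast_sub (by omega : 1 ≤ n), Nat.cast_one]
    rw [(by ring : 2 * S = S + S), hss, Finset.sum_congr rfl (fun c _ => hinner c),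
      Finset.sum_const, nsmul_eq_mul, Finset.card_univ, Fintype.card_fin]
    ring
  -- nonemptiness
  obtain ⟨B0, hB0⟩ := Fintype.exists_ne_of_one_lt_card (by simp; omega) A
  have hne : (univ.erase A).Nonempty := ⟨B0, Finset.mem_erase.2 ⟨hB0, Finset.mem_univ _⟩⟩
  -- A's score is below m + (n-1)*m/2
  have hAlt : abcScore n ballots A < m + ((n:ℚ) - 1) * (m / 2) := by
    rw [hscore A]
    have := Finset.sum_lt_sum_of_nonempty hne
      (f := fun y => F A y) (g := fun _ => m / 2)
      (fun y hy => hFhalf y (Finset.ne_of_mem_erase hy))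
    rw [Finset.sum_const, nsmul_eq_mul, hcard] at this
    linarith
  -- total
  have hT : ∑ c : Fin n, abcScore n ballots c = (n:ℚ) * m + S := by
    simp only [hscore, Finset.sum_add_distrib, Finset.sum_const, nsmul_eq_mul,
      Finset.card_univ, Fintype.card_fin, ← hS]
  have hT_lt : (n:ℚ) * m + S < (n:ℚ) * abcScore n ballots A := by
    rw [← hT, ← Finset.sum_erase_add _ _ (Finset.mem_univ A)]
    have := Finset.sum_lt_sum_of_nonempty hne
      (f := fun c => abcScore n ballots c) (g := fun _ => abcScore n ballots A)
      (fun c hc => hcon c (Finset.ne_of_mem_erase hc))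
    rw [Finset.sum_const, nsmul_eq_mul, hcard] at this
    have hn2 : (2:ℚ) ≤ (n:ℚ) := by exact_mod_cast hn
    nlinarith [this]
  have hn2 : (2:ℚ) ≤ (n:ℚ) := by exact_mod_cast hn
  have hnpos : (0:ℚ) < (n:ℚ) := by linarith
  have h3 := mul_lt_mul_of_pos_left hAlt hnpos
  have hexp : (n:ℚ) * (m + ((n:ℚ) - 1) * (m / 2)) = (n:ℚ) * m + S := by
    linear_combination (-1/2) * h2S
  linarith
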